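/- For all n, m ≥ 1, the strong alliance polynomial of the complete bipartite graph satisfies a(K_{n,m}; x) = (a(K_n; x) + C(n, n/2) x^{n/2}) · (a(K_m; x) + C(m, m/2) x^{m/2}), where the term C(n, n/2) x^{n/2} is understood to be 0 when n is odd (and similarly C(m, m/2) x^{m/2} is 0 when m is odd). -/

import Mathlib

open SimpleGraph Polynomial Finset

/-- `δ_S(v)`: the number of neighbors of `v` lying in the set `S`. -/
noncomputable def degIn {V : Type*} (G : SimpleGraph V) (S : Finset V) (v : V) : ℕ :=
  ((S : Set V) ∩ G.neighborSet v).ncard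

/-- `δ(v)`: the degree of `v` in `G`. -/
noncomputable def degOf {V : Type*} (G : SimpleGraph V) (v : V) : ℕ :=
  (G.neighborSet v).ncard

/-- `S` is a strong defensive alliance in `G`: `S` is nonempty and every `v ∈ S`
satisfies `2·δ_S(v) ≥ δ(v)`. -/
def IsStrongAlliance {V : Type*} (G : SimpleGraph V) (S : Finset V) : Prop :=
  S.Nonempty ∧ ∀ v ∈ S, degOf G v ≤ 2 * degIn G S v

/-- The alliances counted by the strong alliance polynomial: strong defensive alliances
whose induced subgraph is connected. -/
def IsCountedAlliance {V : Type*} (G : SimpleGraph V) (S : Finset V) : Prop :=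
  IsStrongAlliance G S ∧ (G.induce (S : Set V)).Connected

/-- `a_k(G)`: the number of strong defensive alliances of cardinality `k` in `G`
whose induced subgraph is connected. -/
noncomputable def aCoeff {V : Type*} (G : SimpleGraph V) (k : ℕ) : ℕ :=
  {S : Finset V | S.card = k ∧ IsCountedAlliance G S}.ncard

/-- The strong alliance polynomial `a(G;x) = Σ_k a_k(G) x^k`. -/
noncomputable def alliancePoly {V : Type*} [Fintype V] (G : SimpleGraph V) : Polynomial ℤ :=
  ∑ k ∈ Finset.range (Fintype.card V + 1), Polynomial.C (aCoeff G k : ℤ) * Polynomial.X ^ k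

section Aux

open Sum

lemma aCoeff_zero_of_gt {V : Type*} [Fintype V] (G : SimpleGraph V) (k : ℕ)
    (hk : Fintype.card V < k) : aCoeff G k = 0 := by
  have : {S : Finset V | S.card = k ∧ IsCountedAlliance G S} = ∅ := by
    ext S
    simp only [Set.mem_setOf_eq, Set.mem_empty_iff_false, iff_false, not_and]
    intro h
    exact absurd (h ▸ S.card_le_univ) (by simpa [Finset.card_univ] using hk.not_ge)
  rw [aCoeff, this, Set.ncard_empty]

lemma coeff_alliancePoly {V : Type*} [Fintype V] (G : SimpleGraph V) (k : ℕ) :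
    (alliancePoly G).coeff k = (aCoeff G k : ℤ) := by
  rw [alliancePoly, Polynomial.finset_sum_coeff]
  simp only [Polynomial.coeff_C_mul, Polynomial.coeff_X_pow, mul_ite, mul_one, mul_zero]
  rw [Finset.sum_ite_eq (Finset.range (Fintype.card V + 1)) k (fun j => (aCoeff G j : ℤ))]
  split_ifs with h
  · rfl
  · rw [aCoeff_zero_of_gt G k (by simpa using h), Nat.cast_zero]

lemma induce_top_eq {V : Type*} (s : Set V) : (⊤ : SimpleGraph V).induce s = ⊤ := by
  ext a b
  simp [Subtype.coe_injective.ne_iff]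

lemma degOf_top {n : ℕ} (v : Fin n) : degOf (⊤ : SimpleGraph (Fin n)) v = n - 1 := by
  have : (⊤ : SimpleGraph (Fin n)).neighborSet v = {v}ᶜ := by
    ext w; simp [adj_comm, eq_comm, ne_comm]
  rw [degOf, this]
  rw [Set.ncard_eq_toFinset_card']
  simp [Finset.card_compl]

lemma degIn_top {n : ℕ} (S : Finset (Fin n)) (v : Fin n) (hv : v ∈ S) :
    degIn (⊤ : SimpleGraph (Fin n)) S v = S.card - 1 := by
  have hns : (⊤ : SimpleGraph (Fin n)).neighborSet v = {v}ᶜ := by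
    ext w; simp [adj_comm, eq_comm, ne_comm]
  have : (S : Set (Fin n)) ∩ {v}ᶜ = ↑(S.erase v) := by
    ext w; simp [and_comm]
  rw [degIn, hns, this, Set.ncard_coe_finset, Finset.card_erase_of_mem hv]

lemma counted_top_iff {n : ℕ} (hn : 1 ≤ n) (S : Finset (Fin n)) :
    IsCountedAlliance (⊤ : SimpleGraph (Fin n)) S ↔ n < 2 * S.card := by
  constructor
  · rintro ⟨⟨⟨v, hv⟩, hall⟩, -⟩
    have h := hall v hv
    rw [degOf_top, degIn_top S v hv] at h
    have hc : 1 ≤ S.card := Finset.card_pos.mpr ⟨v, hv⟩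
    omega
  · intro h
    have hc : 1 ≤ S.card := by omega
    obtain ⟨v, hv⟩ := Finset.card_pos.mp hc
    have hne : S.Nonempty := ⟨v, hv⟩
    refine ⟨⟨hne, fun w hw => ?_⟩, ?_⟩
    · rw [degOf_top, degIn_top S w hw]; omega
    · rw [induce_top_eq]
      have : Nonempty ((S : Set (Fin n)) : Type _) := ⟨⟨v, hv⟩⟩
      exact connected_top

lemma aCoeff_top {n : ℕ} (hn : 1 ≤ n) (k : ℕ) :
    aCoeff (⊤ : SimpleGraph (Fin n)) k = if n < 2 * k then n.choose k else 0 := by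
  classical
  rw [aCoeff]
  rw [show {S : Finset (Fin n) | S.card = k ∧ IsCountedAlliance (⊤ : SimpleGraph (Fin n)) S}
      = {S : Finset (Fin n) | S.card = k ∧ n < 2 * k} from by
    ext S
    simp only [Set.mem_setOf_eq, and_congr_right_iff]
    intro hc
    rw [counted_top_iff hn, hc]]
  rw [Set.ncard_eq_toFinset_card', Set.toFinset_setOf]
  split_ifs with h
  · rw [show (univ.filter fun S : Finset (Fin n) => S.card = k ∧ n < 2 * k)
        = Finset.powersetCard k univ from by
      ext S
      simp [h, Finset.mem_powersetCard_univ]]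
    rw [Finset.card_powersetCard, Finset.card_univ, Fintype.card_fin]
  · rw [Finset.filter_false_of_mem (fun S _ => by simp [h]), Finset.card_empty]

variable {n m : ℕ}

lemma nbhd_inl (i : Fin n) :
    (completeBipartiteGraph (Fin n) (Fin m)).neighborSet (inl i) = Set.range inr := by
  ext w; cases w <;> simp [completeBipartiteGraph]

lemma nbhd_inr (j : Fin m) :
    (completeBipartiteGraph (Fin n) (Fin m)).neighborSet (inr j) = Set.range inl := by
  ext w; cases w <;> simp [completeBipartiteGraph]

lemma degOf_inl (i : Fin n) : degOf (completeBipartiteGraph (Fin n) (Fin m)) (inl i) = m := by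
  rw [degOf, nbhd_inl, ← Set.image_univ,
    Set.ncard_image_of_injective _ inr_injective, Set.ncard_univ, Nat.card_eq_fintype_card,
    Fintype.card_fin]

lemma degOf_inr (j : Fin m) : degOf (completeBipartiteGraph (Fin n) (Fin m)) (inr j) = n := by
  rw [degOf, nbhd_inr, ← Set.image_univ,
    Set.ncard_image_of_injective _ inl_injective, Set.ncard_univ, Nat.card_eq_fintype_card,
    Fintype.card_fin]

lemma degIn_inl (S : Finset (Fin n ⊕ Fin m)) (i : Fin n) :
    degIn (completeBipartiteGraph (Fin n) (Fin m)) S (inl i) = S.toRight.card := by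
  rw [degIn, nbhd_inl]
  have : (S : Set (Fin n ⊕ Fin m)) ∩ Set.range inr = inr '' ↑S.toRight := by
    ext w; cases w <;> simp
  rw [this, Set.ncard_image_of_injective _ inr_injective, Set.ncard_coe_finset]

lemma degIn_inr (S : Finset (Fin n ⊕ Fin m)) (j : Fin m) :
    degIn (completeBipartiteGraph (Fin n) (Fin m)) S (inr j) = S.toLeft.card := by
  rw [degIn, nbhd_inr]
  have : (S : Set (Fin n ⊕ Fin m)) ∩ Set.range inl = inl '' ↑S.toLeft := by
    ext w; cases w <;> simp
  rw [this, Set.ncard_image_of_injective _ inl_injective, Set.ncard_coe_finset]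

lemma counted_bipartite_iff (hn : 1 ≤ n) (hm : 1 ≤ m) (S : Finset (Fin n ⊕ Fin m)) :
    IsCountedAlliance (completeBipartiteGraph (Fin n) (Fin m)) S ↔
      n ≤ 2 * S.toLeft.card ∧ m ≤ 2 * S.toRight.card := by
  constructor
  · rintro ⟨⟨⟨v, hv⟩, hall⟩, -⟩
    have hL : ∃ i, inl i ∈ S := by
      cases v with
      | inl i => exact ⟨i, hv⟩
      | inr j =>
        have h := hall _ hv
        rw [degOf_inr, degIn_inr] at h
        have : 1 ≤ S.toLeft.card := by omega
        obtain ⟨i, hi⟩ := Finset.card_pos.mp this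
        exact ⟨i, by simpa using hi⟩
    obtain ⟨i, hi⟩ := hL
    have h1 := hall _ hi
    rw [degOf_inl, degIn_inl] at h1
    have hR : 1 ≤ S.toRight.card := by omega
    obtain ⟨j, hj⟩ := Finset.card_pos.mp hR
    have h2 := hall _ (by simpa using hj : inr j ∈ S)
    rw [degOf_inr, degIn_inr] at h2
    exact ⟨h2, h1⟩
  · rintro ⟨h1, h2⟩
    have hL : 1 ≤ S.toLeft.card := by omega
    have hR : 1 ≤ S.toRight.card := by omega
    obtain ⟨i, hi⟩ := Finset.card_pos.mp hL
    obtain ⟨j, hj⟩ := Finset.card_pos.mp hR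
    rw [Finset.mem_toLeft] at hi
    rw [Finset.mem_toRight] at hj
    refine ⟨⟨⟨inl i, hi⟩, fun w hw => ?_⟩, ?_⟩
    · cases w with
      | inl a => rw [degOf_inl, degIn_inl]; exact h2
      | inr b => rw [degOf_inr, degIn_inr]; exact h1
    · have hreach : ∀ (w : ((S : Set (Fin n ⊕ Fin m)) : Type _)),
          ((completeBipartiteGraph (Fin n) (Fin m)).induce
            (S : Set (Fin n ⊕ Fin m))).Reachable w ⟨inl i, hi⟩ := by
        rintro ⟨w, hw⟩
        cases w with
        | inl a =>
          have step1 : ((completeBipartiteGraph (Fin n) (Fin m)).induce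
              (S : Set (Fin n ⊕ Fin m))).Adj ⟨inl a, hw⟩ ⟨inr j, hj⟩ := Or.inl ⟨rfl, rfl⟩
          have step2 : ((completeBipartiteGraph (Fin n) (Fin m)).induce
              (S : Set (Fin n ⊕ Fin m))).Adj ⟨inr j, hj⟩ ⟨inl i, hi⟩ := Or.inr ⟨rfl, rfl⟩
          exact step1.reachable.trans step2.reachable
        | inr b =>
          have step : ((completeBipartiteGraph (Fin n) (Fin m)).induce
              (S : Set (Fin n ⊕ Fin m))).Adj ⟨inr b, hw⟩ ⟨inl i, hi⟩ := Or.inr ⟨rfl, rfl⟩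
          exact step.reachable
      have : Nonempty ((S : Set (Fin n ⊕ Fin m)) : Type _) := ⟨⟨inl i, hi⟩⟩
      exact ⟨fun u v => (hreach u).trans (hreach v).symm⟩

lemma card_left_right (a b : ℕ) :
    (univ.filter fun S : Finset (Fin n ⊕ Fin m) => S.toLeft.card = a ∧ S.toRight.card = b).card
      = n.choose a * m.choose b := by
  classical
  have : n.choose a * m.choose b
      = ((Finset.powersetCard a (univ : Finset (Fin n))) ×ˢ
          (Finset.powersetCard b (univ : Finset (Fin m)))).card := by
    simp [Finset.card_powersetCard]
  rw [this]
  apply Finset.card_nbij' (i := fun S => (S.toLeft, S.toRight))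
    (j := fun p => p.1.disjSum p.2)
  · intro S hS
    simp only [Finset.mem_coe, Finset.mem_filter] at hS
    simp [Finset.mem_powersetCard_univ, hS.2.1, hS.2.2]
  · intro p hp
    simp only [Finset.mem_coe, Finset.mem_product, Finset.mem_powersetCard_univ] at hp
    simp [hp.1, hp.2]
  · intro S hS
    simp [Finset.toLeft_disjSum_toRight]
  · intro p hp
    simp

lemma count_bip (k : ℕ) :
    (univ.filter fun S : Finset (Fin n ⊕ Fin m) =>
        S.card = k ∧ n ≤ 2 * S.toLeft.card ∧ m ≤ 2 * S.toRight.card).card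
      = ∑ p ∈ Finset.HasAntidiagonal.antidiagonal k,
          (if n ≤ 2 * p.1 then n.choose p.1 else 0) *
          (if m ≤ 2 * p.2 then m.choose p.2 else 0) := by
  classical
  rw [Finset.card_eq_sum_card_fiberwise
    (f := fun S : Finset (Fin n ⊕ Fin m) => (S.toLeft.card, S.toRight.card))
    (t := Finset.HasAntidiagonal.antidiagonal k)
    (fun S hS => by
      simp only [Finset.mem_coe, Finset.mem_filter] at hS
      simp [Finset.HasAntidiagonal.mem_antidiagonal, Finset.card_toLeft_add_card_toRight, hS.2.1])]
  refine Finset.sum_congr rfl ?_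
  rintro ⟨a, b⟩ hab
  rw [Finset.HasAntidiagonal.mem_antidiagonal] at hab
  rw [Finset.filter_filter]
  by_cases hcond : n ≤ 2 * a ∧ m ≤ 2 * b
  · rw [if_pos hcond.1, if_pos hcond.2, ← card_left_right a b]
    congr 1
    apply Finset.filter_congr
    intro S _
    constructor
    · rintro ⟨-, h⟩
      exact ⟨congrArg Prod.fst h, congrArg Prod.snd h⟩
    · rintro ⟨h1, h2⟩
      refine ⟨⟨?_, ?_, ?_⟩, by simp [h1, h2]⟩
      · rw [← Finset.card_toLeft_add_card_toRight, h1, h2, hab]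
      · rw [h1]; exact hcond.1
      · rw [h2]; exact hcond.2
  · have : ((if n ≤ 2 * a then n.choose a else 0) * if m ≤ 2 * b then m.choose b else 0) = 0 := by
      rcases not_and_or.mp hcond with h | h
      · rw [if_neg h, zero_mul]
      · rw [if_neg h, mul_zero]
    rw [this, Finset.card_eq_zero]
    apply Finset.filter_false_of_mem
    rintro S -
    rintro ⟨⟨-, hl, hr⟩, hp⟩
    have h1 : S.toLeft.card = a := congrArg Prod.fst hp
    have h2 : S.toRight.card = b := congrArg Prod.snd hp
    exact hcond ⟨h1 ▸ hl, h2 ▸ hr⟩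

lemma aCoeff_bipartite (hn : 1 ≤ n) (hm : 1 ≤ m) (k : ℕ) :
    aCoeff (completeBipartiteGraph (Fin n) (Fin m)) k
      = ∑ p ∈ Finset.HasAntidiagonal.antidiagonal k,
          (if n ≤ 2 * p.1 then n.choose p.1 else 0) *
          (if m ≤ 2 * p.2 then m.choose p.2 else 0) := by
  classical
  rw [aCoeff, Set.ncard_eq_toFinset_card', Set.toFinset_setOf, ← count_bip k]
  congr 1
  apply Finset.filter_congr
  intro S _
  rw [counted_bipartite_iff hn hm]

lemma coeff_factor (hn : 1 ≤ n) (a : ℕ) :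
    (alliancePoly (⊤ : SimpleGraph (Fin n)) +
        (if Even n then Polynomial.C ((n.choose (n / 2) : ℕ) : ℤ) * Polynomial.X ^ (n / 2)
          else 0)).coeff a
      = if n ≤ 2 * a then ((n.choose a : ℕ) : ℤ) else 0 := by
  rw [Polynomial.coeff_add, coeff_alliancePoly, aCoeff_top hn]
  by_cases he : Even n
  · rw [if_pos he, Polynomial.coeff_C_mul, Polynomial.coeff_X_pow]
    rw [Nat.even_iff] at he
    by_cases ha : a = n / 2
    · rw [if_neg (by omega : ¬ n < 2 * a), if_pos ha, if_pos (by omega : n ≤ 2 * a), ha]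
      simp
    · by_cases h3 : n ≤ 2 * a
      · rw [if_pos (by omega : n < 2 * a), if_neg ha, if_pos h3]; simp
      · rw [if_neg (by omega : ¬ n < 2 * a), if_neg ha, if_neg h3]; simp
  · rw [if_neg he, Polynomial.coeff_zero, add_zero]
    rw [Nat.not_even_iff] at he
    by_cases h3 : n < 2 * a
    · rw [if_pos h3, if_pos (by omega : n ≤ 2 * a)]
    · rw [if_neg h3, if_neg (by omega : ¬ n ≤ 2 * a)]
      simp

end Aux

/-- For `n, m ≥ 1`,
`a(K_{n,m};x) = (a(K_n;x) + C(n,n/2)x^{n/2})·(a(K_m;x) + C(m,m/2)x^{m/2})`,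
where the term `C(n,n/2)x^{n/2}` is understood to be `0` when `n` is odd (and similarly
for `m`). -/
theorem stmt_13 (n m : ℕ) (hn : 1 ≤ n) (hm : 1 ≤ m) :
    alliancePoly (completeBipartiteGraph (Fin n) (Fin m)) =
      (alliancePoly (⊤ : SimpleGraph (Fin n)) +
          (if Even n then Polynomial.C ((n.choose (n / 2) : ℕ) : ℤ) * Polynomial.X ^ (n / 2)
            else 0)) *
      (alliancePoly (⊤ : SimpleGraph (Fin m)) +
          (if Even m then Polynomial.C ((m.choose (m / 2) : ℕ) : ℤ) * Polynomial.X ^ (m / 2)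
            else 0)) := by
  apply Polynomial.ext
  intro k
  rw [coeff_alliancePoly, aCoeff_bipartite hn hm, Polynomial.coeff_mul]
  push_cast
  refine Finset.sum_congr rfl fun p hp => ?_
  rw [coeff_factor hn, coeff_factor hm]
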